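/- arXiv:1505.03127 — 3 statements merged into one kernel-verified Lean document; each statement's English description precedes it below -/
import Mathlib

section
/- Let G be a group, V a finite-dimensional complex vector space, and ρ : G → GL(V) a representation. Suppose (v_i)_{i∈ι} is a basis of V and χ : ι → (G → ℂ) is a family of functions that are pairwise distinct, such that ρ(g)(v_i) = χ_i(g) · v_i for every g ∈ G and i ∈ ι. Then every ρ-invariant linear subspace U of V (i.e., ρ(g)(U) ⊆ U for all g ∈ G) is equal to the linear span of the set {v_i : i ∈ ι, v_i ∈ U}. -/
/-- If a representation `ρ` of a group `G` on a finite-dimensional complex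
vector space `V` acts on each member of a basis `(v i)` by a character `χ i`, and the
characters are pairwise distinct, then every `ρ`-invariant subspace `U` of `V` is
spanned by the basis vectors it contains. -/
theorem invariant_subspace_spanned_by_weight_vectors
    {G : Type*} [Group G] {V : Type*} [AddCommGroup V] [Module ℂ V]
    [FiniteDimensional ℂ V]
    (ρ : G →* (V ≃ₗ[ℂ] V))
    {ι : Type*} (v : Module.Basis ι ℂ V)
    (χ : ι → G → ℂ) (hχ : Function.Injective χ)
    (hv : ∀ (g : G) (i : ι), ρ g (v i) = χ i g • v i)
    (U : Submodule ℂ V) (hU : ∀ g : G, ∀ u ∈ U, ρ g u ∈ U) :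
    U = Submodule.span ℂ {x : V | x ∈ Set.range v ∧ x ∈ U} := by
  classical
  have hrepr : ∀ (g : G) (u : V) (i : ι), v.repr ((ρ g) u) i = χ i g * v.repr u i := by
    intro g u i
    have h1 : ((v.coord i).comp (ρ g).toLinearMap) = (χ i g) • v.coord i := by
      apply v.ext; intro j
      by_cases h : i = j
      · simp [hv g j, Module.Basis.coord_apply, Finsupp.single_apply, h, smul_eq_mul]
      · simp [hv g j, Module.Basis.coord_apply, Finsupp.single_apply, h, smul_eq_mul,
          Finsupp.single_eq_of_ne (Ne.symm h)]
    have := LinearMap.congr_fun h1 u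
    simpa [Module.Basis.coord_apply, smul_eq_mul] using this
  have main : ∀ n : ℕ, ∀ u ∈ U, (v.repr u).support.card ≤ n →
      ∀ i, v.repr u i ≠ 0 → v i ∈ U := by
    intro n
    induction n with
    | zero =>
      intro u hu hc i hi
      have : i ∈ (v.repr u).support := Finsupp.mem_support_iff.2 hi
      have := Finset.card_pos.2 ⟨i, this⟩
      omega
    | succ n ih =>
      intro u hu hc i hi
      have hisup : i ∈ (v.repr u).support := Finsupp.mem_support_iff.2 hi
      by_cases hsup : (v.repr u).support ⊆ {i}
      · -- u = (repr u i) • v i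
        have hrep : v.repr u = Finsupp.single i (v.repr u i) := by
          ext j
          by_cases h : j = i
          · simp [h]
          · have : j ∉ (v.repr u).support := fun hj => h (Finset.mem_singleton.1 (hsup hj))
            simp [Finsupp.notMem_support_iff.1 this, Finsupp.single_apply, Ne.symm h]
        set c := v.repr u i with hcdef
        have hu' : u = c • v i := by
          have := congrArg v.repr.symm hrep
          simpa [Module.Basis.repr_symm_single] using this
        have hvi : v i = c⁻¹ • u := by
          rw [hu', smul_smul, inv_mul_cancel₀ hi, one_smul]
        rw [hvi]
        exact U.smul_mem _ hu
      · obtain ⟨j, hjsup, hji⟩ : ∃ j ∈ (v.repr u).support, j ≠ i := by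
          by_contra h
          push_neg at h
          exact hsup fun k hk => Finset.mem_singleton.2 (h k hk)
        have hχij : χ i ≠ χ j := fun h => hji (hχ h).symm
        obtain ⟨g, hg⟩ : ∃ g, χ i g ≠ χ j g := by
          by_contra h
          push_neg at h
          exact hχij (funext h)
        set w : V := ρ g u - χ j g • u with hw
        have hwU : w ∈ U := U.sub_mem (hU g u hu) (U.smul_mem _ hu)
        have hwrepr : ∀ k, v.repr w k = (χ k g - χ j g) * v.repr u k := by
          intro k
          simp [hw, hrepr, sub_mul, smul_eq_mul]
        have hsub : (v.repr w).support ⊆ (v.repr u).support.erase j := by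
          intro k hk
          rw [Finsupp.mem_support_iff, hwrepr] at hk
          refine Finset.mem_erase.2 ⟨?_, Finsupp.mem_support_iff.2 fun h0 => hk (by rw [h0, mul_zero])⟩
          rintro rfl
          exact hk (by ring)
        have hcard : (v.repr w).support.card ≤ n := by
          have h1 := Finset.card_le_card hsub
          have h2 := Finset.card_erase_of_mem hjsup
          omega
        have hwi : v.repr w i ≠ 0 := by
          rw [hwrepr]
          exact mul_ne_zero (sub_ne_zero.2 hg) hi
        exact ih w hwU hcard i hwi
  apply le_antisymm
  · intro u hu
    have hmem : u ∈ Submodule.span ℂ (v '' ((v.repr u).support : Set ι)) :=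
      Module.Basis.mem_span_repr_support v u
    refine Submodule.span_le.2 ?_ hmem
    rintro x ⟨k, hk, rfl⟩
    apply Submodule.subset_span
    exact ⟨⟨k, rfl⟩, main _ u hu le_rfl k (Finsupp.mem_support_iff.1 hk)⟩
  · exact Submodule.span_le.2 fun x hx => hx.2
end

section
/- Let G be a group, V a finite-dimensional complex vector space, and ρ : G → GL(V) a representation. Suppose (v_i)_{i∈ι} is a basis of V and χ : ι → (G → ℂ) is a family of functions that are pairwise distinct, such that ρ(g)(v_i) = χ_i(g) · v_i for every g ∈ G and i ∈ ι. Let U₁ and U₂ be ρ-invariant subspaces of V of codimension 1, and suppose there is a single function μ : G → ℂ such that for each j ∈ {1,2} and every g ∈ G, the linear map induced by ρ(g) on the quotient V/U_j is multiplication by μ(g). Then U₁ = U₂. -/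
lemma aux_corank_one {G : Type*} [Group G] {V : Type*} [AddCommGroup V] [Module ℂ V]
    [FiniteDimensional ℂ V]
    (ρ : G →* (V ≃ₗ[ℂ] V)) {ι : Type*} (v : Module.Basis ι ℂ V)
    (χ : ι → G → ℂ)
    (hv : ∀ (g : G) (i : ι), ρ g (v i) = χ i g • v i)
    (U : Submodule ℂ V) (hcod : Module.finrank ℂ (V ⧸ U) = 1)
    (μ : G → ℂ)
    (hμ : ∀ (g : G) (x : V),
      (Submodule.Quotient.mk (ρ g x) : V ⧸ U) = μ g • (Submodule.Quotient.mk x : V ⧸ U))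
    (i₀ : ι) (hi₀ : ∀ i, i ≠ i₀ → χ i ≠ μ) :
    U = Submodule.span ℂ (v '' {i | i ≠ i₀}) := by
  have hUnetop : U ≠ ⊤ := by
    intro h
    subst h
    have : Subsingleton (V ⧸ (⊤ : Submodule ℂ V)) :=
      Submodule.Quotient.subsingleton_iff.2 rfl
    rw [Module.finrank_zero_of_subsingleton] at hcod
    exact one_ne_zero hcod.symm
  -- every basis vector with χ i ≠ μ lies in U
  have hmem : ∀ i, i ≠ i₀ → v i ∈ U := by
    intro i hi
    obtain ⟨g, hg⟩ := Function.ne_iff.1 (hi₀ i hi)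
    have h := hμ g (v i)
    rw [hv g i, Submodule.Quotient.mk_smul] at h
    have h' : (χ i g - μ g) • (Submodule.Quotient.mk (v i) : V ⧸ U) = 0 := by
      rw [sub_smul, h, sub_self]
    have hne : χ i g - μ g ≠ 0 := sub_ne_zero.2 hg
    have := smul_eq_zero.1 h'
    rcases this with h0 | h0
    · exact absurd h0 hne
    · exact (Submodule.Quotient.mk_eq_zero U).1 h0
  -- v i₀ ∉ U
  have hvi₀ : v i₀ ∉ U := by
    intro hin
    apply hUnetop
    rw [eq_top_iff, ← v.span_eq]
    apply Submodule.span_le.2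
    rintro _ ⟨i, rfl⟩
    by_cases hi : i = i₀
    · subst hi; exact hin
    · exact hmem i hi
  apply le_antisymm
  · -- U ≤ span
    intro u hu
    set c : ℂ := v.repr u i₀ with hc
    have hu' : u - c • v i₀ ∈ Submodule.span ℂ (v '' {i | i ≠ i₀}) := by
      rw [Module.Basis.mem_span_image]
      intro i hi
      simp only [Finset.mem_coe, Finsupp.mem_support_iff] at hi
      intro h
      subst h
      simp [hc] at hi
    have hc0 : c = 0 := by
      by_contra hc0
      apply hvi₀
      have h1 : u - c • v i₀ ∈ U := by
        apply Submodule.span_le.2 _ hu'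
        rintro _ ⟨i, hi, rfl⟩
        exact hmem i hi
      have h2 : c • v i₀ ∈ U := by
        have := U.sub_mem hu h1
        simpa using this
      have := U.smul_mem c⁻¹ h2
      rwa [smul_smul, inv_mul_cancel₀ hc0, one_smul] at this
    rw [hc0, zero_smul, sub_zero] at hu'
    exact hu'
  · apply Submodule.span_le.2
    rintro _ ⟨i, hi, rfl⟩
    exact hmem i hi

/-- Let `ρ` be a representation of a group `G` on a finite-dimensional
complex vector space `V` acting on each member of a basis `(v i)` by pairwise distinct
characters `χ i`. If `U₁`, `U₂` are `ρ`-invariant subspaces of codimension 1 such that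
for a single function `μ : G → ℂ` the map induced by `ρ g` on each quotient `V ⧸ Uⱼ` is
multiplication by `μ g`, then `U₁ = U₂`. -/
theorem corank_one_invariant_subspaces_with_same_character_are_equal
    {G : Type*} [Group G] {V : Type*} [AddCommGroup V] [Module ℂ V]
    [FiniteDimensional ℂ V]
    (ρ : G →* (V ≃ₗ[ℂ] V))
    {ι : Type*} (v : Module.Basis ι ℂ V)
    (χ : ι → G → ℂ) (hχ : Function.Injective χ)
    (hv : ∀ (g : G) (i : ι), ρ g (v i) = χ i g • v i)
    (U₁ U₂ : Submodule ℂ V)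
    (hU₁ : ∀ g : G, ∀ u ∈ U₁, ρ g u ∈ U₁)
    (hU₂ : ∀ g : G, ∀ u ∈ U₂, ρ g u ∈ U₂)
    (hcod₁ : Module.finrank ℂ (V ⧸ U₁) = 1)
    (hcod₂ : Module.finrank ℂ (V ⧸ U₂) = 1)
    (μ : G → ℂ)
    (hμ₁ : ∀ (g : G) (x : V),
      (Submodule.Quotient.mk (ρ g x) : V ⧸ U₁) = μ g • (Submodule.Quotient.mk x : V ⧸ U₁))
    (hμ₂ : ∀ (g : G) (x : V),
      (Submodule.Quotient.mk (ρ g x) : V ⧸ U₂) = μ g • (Submodule.Quotient.mk x : V ⧸ U₂)) :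
    U₁ = U₂ := by
  -- there exists i₀ with χ i₀ = μ, otherwise U₁ = ⊤
  have hex : ∃ i₀ : ι, χ i₀ = μ := by
    by_contra h
    push_neg at h
    have hUtop : U₁ = ⊤ := by
      rw [eq_top_iff, ← v.span_eq]
      apply Submodule.span_le.2
      rintro _ ⟨i, rfl⟩
      obtain ⟨g, hg⟩ := Function.ne_iff.1 (h i)
      have hq := hμ₁ g (v i)
      rw [hv g i, Submodule.Quotient.mk_smul] at hq
      have h' : (χ i g - μ g) • (Submodule.Quotient.mk (v i) : V ⧸ U₁) = 0 := by
        rw [sub_smul, hq, sub_self]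
      rcases smul_eq_zero.1 h' with h0 | h0
      · exact absurd h0 (sub_ne_zero.2 hg)
      · exact (Submodule.Quotient.mk_eq_zero U₁).1 h0
    subst hUtop
    have : Subsingleton (V ⧸ (⊤ : Submodule ℂ V)) :=
      Submodule.Quotient.subsingleton_iff.2 rfl
    rw [Module.finrank_zero_of_subsingleton] at hcod₁
    exact one_ne_zero hcod₁.symm
  obtain ⟨i₀, hi₀⟩ := hex
  have hi₀' : ∀ i, i ≠ i₀ → χ i ≠ μ := by
    intro i hi h
    exact hi (hχ (h.trans hi₀.symm))
  rw [aux_corank_one ρ v χ hv U₁ hcod₁ μ hμ₁ i₀ hi₀',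
      aux_corank_one ρ v χ hv U₂ hcod₂ μ hμ₂ i₀ hi₀']
end

section
/- Let Φ be a reduced crystallographic root system with base Π in a finite-dimensional real inner product space E, let S ⊆ Π, let Δ⁺ be the set of positive roots, and let Δ_S⁺ be the set of positive roots that are ℤ-linear combinations of elements of S. Then μ_S = Σ_{γ ∈ Δ⁺\Δ_S⁺} γ is dominant: ⟪μ_S, β⟫ ≥ 0 for every β ∈ Π. -/
open scoped RealInnerProductSpace

lemma sum_refl_inner {E : Type*} [NormedAddCommGroup E] [InnerProductSpace ℝ E]
    [DecidableEq E] (β : E) (hβ : β ≠ 0) (T : Finset E) (hβT : β ∈ T)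
    (hσ : ∀ γ ∈ T, γ ≠ β → (γ - (2 * ⟪γ, β⟫ / ⟪β, β⟫) • β ∈ T ∧
      γ - (2 * ⟪γ, β⟫ / ⟪β, β⟫) • β ≠ β)) :
    ⟪∑ γ ∈ T, γ, β⟫ = ⟪β, β⟫ := by
  have hbb : ⟪β, β⟫ ≠ 0 := inner_self_ne_zero.mpr hβ
  have hinner : ∀ v : E, ⟪v - (2 * ⟪v, β⟫ / ⟪β, β⟫) • β, β⟫ = -⟪v, β⟫ := by
    intro v
    rw [inner_sub_left, real_inner_smul_left]
    field_simp
    ring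
  have hσσ : ∀ v : E,
      (v - (2 * ⟪v, β⟫ / ⟪β, β⟫) • β) -
        (2 * ⟪v - (2 * ⟪v, β⟫ / ⟪β, β⟫) • β, β⟫ / ⟪β, β⟫) • β = v := by
    intro v
    rw [hinner]
    have h : 2 * -⟪v, β⟫ / ⟪β, β⟫ = -(2 * ⟪v, β⟫ / ⟪β, β⟫) := by ring
    rw [h, neg_smul, sub_neg_eq_add, sub_add_cancel]
  rw [sum_inner, ← Finset.add_sum_erase _ _ hβT]
  have h0 : ∑ γ ∈ T.erase β, ⟪γ, β⟫ = 0 := by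
    apply Finset.sum_involution (fun γ _ => γ - (2 * ⟪γ, β⟫ / ⟪β, β⟫) • β)
    · intro a ha
      rw [hinner]; ring
    · intro a ha hne heq
      exfalso
      have h2 : (2 * ⟪a, β⟫ / ⟪β, β⟫) • β = 0 := sub_eq_self.mp heq
      rcases smul_eq_zero.mp h2 with h3 | h3
      · field_simp at h3
        exact hne (by linarith)
      · exact hβ h3
    · intro a ha
      obtain ⟨hne, haT⟩ := Finset.mem_erase.mp ha
      exact Finset.mem_erase.mpr ⟨(hσ a haT hne).2, (hσ a haT hne).1⟩
    · intro a ha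
      exact hσσ a
  rw [h0, add_zero]

/-- For a reduced crystallographic root system `Φ` with base `Pi`, a
subset `S ⊆ Pi`, the set `Pos` of positive roots and the set `PosS` of positive roots
that are ℤ-linear combinations of elements of `S`: the sum
`μ_S = Σ_{γ ∈ Pos \ PosS} γ` is dominant, i.e. `⟪μ_S, β⟫ ≥ 0` for every `β ∈ Pi`. -/
theorem sum_of_complementary_positive_roots_is_dominant
    {E : Type*} [NormedAddCommGroup E] [InnerProductSpace ℝ E] [FiniteDimensional ℝ E]
    [DecidableEq E]
    (Φ : Set E) (hfin : Φ.Finite) (h0 : 0 ∉ Φ) (hspan : Submodule.span ℝ Φ = ⊤)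
    (hred : ∀ β ∈ Φ, ∀ t : ℝ, t • β ∈ Φ → t = 1 ∨ t = -1)
    (hrefl : ∀ β ∈ Φ, ∀ γ ∈ Φ, γ - (2 * ⟪γ, β⟫ / ⟪β, β⟫) • β ∈ Φ)
    (hcrys : ∀ β ∈ Φ, ∀ γ ∈ Φ, ∃ k : ℤ, 2 * ⟪γ, β⟫ / ⟪β, β⟫ = (k : ℝ))
    (Pi : Finset E) (hPiΦ : ↑Pi ⊆ Φ)
    (hindep : LinearIndependent ℝ (fun x : (Pi : Set E) => (x : E)))
    (hbase : ∀ γ ∈ Φ, ∃ c : E → ℤ, γ = ∑ β ∈ Pi, (c β : ℝ) • β ∧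
      ((∀ β ∈ Pi, 0 ≤ c β) ∨ (∀ β ∈ Pi, c β ≤ 0)))
    (S : Finset E) (hS : S ⊆ Pi)
    -- `Pos` is the set `Δ⁺` of positive roots
    (Pos : Finset E)
    (hPos : ∀ γ : E, γ ∈ Pos ↔ γ ∈ Φ ∧ ∃ c : E → ℕ, γ = ∑ β ∈ Pi, (c β : ℝ) • β)
    -- `PosS` is the set `Δ_S⁺` of positive roots that are ℤ-linear combinations of `S`
    (PosS : Finset E)
    (hPosS : ∀ γ : E, γ ∈ PosS ↔ γ ∈ Pos ∧ ∃ c : E → ℤ, γ = ∑ β ∈ S, (c β : ℝ) • β) :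
    ∀ β ∈ Pi, 0 ≤ ⟪∑ γ ∈ Pos \ PosS, γ, β⟫ := by
  classical
  -- nonzero-ness of roots
  have hne0 : ∀ x ∈ Φ, x ≠ 0 := fun x hx h => h0 (h ▸ hx)
  -- uniqueness of coefficients over Pi
  have hzero : ∀ g : E → ℝ, ∑ x ∈ Pi, g x • x = 0 → ∀ x ∈ Pi, g x = 0 := by
    intro g hg x hx
    have hindep' : LinearIndependent ℝ (fun x : ↥Pi => (x : E)) := hindep
    have h := linearIndependent_iff'.mp hindep' Finset.univ (fun y => g y)
    have hsum : ∑ i : ↥Pi, g i • (i : E) = 0 := by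
      rw [Finset.sum_coe_sort Pi (fun y => g y • y)]
      exact hg
    exact h hsum ⟨x, hx⟩ (Finset.mem_univ _)
  have huniq : ∀ a b : E → ℝ, ∑ x ∈ Pi, a x • x = ∑ x ∈ Pi, b x • x →
      ∀ x ∈ Pi, a x = b x := by
    intro a b hab x hx
    have h := hzero (fun y => a y - b y)
      (by simp only [sub_smul, Finset.sum_sub_distrib, hab, sub_self]) x hx
    simpa [sub_eq_zero] using h
  -- indicator sums
  have hind : ∀ (T : Finset E) (t : ℝ) (a : E), a ∈ T →
      ∑ x ∈ T, (if x = a then t else 0) • x = t • a := by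
    intro T t a ha
    rw [Finset.sum_eq_single_of_mem a ha]
    · simp
    · intro x hx hne
      simp [hne]
  -- Pi ⊆ Pos
  have hPiPos : ∀ x ∈ Pi, x ∈ Pos := by
    intro x hx
    rw [hPos]
    refine ⟨hPiΦ hx, fun y => if y = x then 1 else 0, ?_⟩
    have : ∑ y ∈ Pi, (((if y = x then 1 else 0 : ℕ) : ℝ)) • y
        = ∑ y ∈ Pi, (if y = x then (1:ℝ) else 0) • y := by
      refine Finset.sum_congr rfl fun y _ => ?_
      split <;> simp
    rw [this, hind Pi 1 x hx, one_smul]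
  have hPosSPos : PosS ⊆ Pos := fun γ hγ => ((hPosS γ).mp hγ).1
  -- simple roots pairwise non-acute
  have hneg : ∀ α ∈ Pi, ∀ b ∈ Pi, α ≠ b → ⟪α, b⟫ ≤ 0 := by
    intro α hα b hb hab
    by_contra hpos
    push_neg at hpos
    have hbΦ := hPiΦ hb
    have hαΦ := hPiΦ hα
    have hbb : (0:ℝ) < ⟪b, b⟫ :=
      lt_of_le_of_ne real_inner_self_nonneg (Ne.symm (inner_self_ne_zero.mpr (hne0 b hbΦ)))
    obtain ⟨m, hm⟩ := hcrys b hbΦ α hαΦ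
    have hmpos : (0:ℝ) < (m : ℝ) := by
      rw [← hm]; positivity
    have hγΦ : α - (m : ℝ) • b ∈ Φ := by
      have := hrefl b hbΦ α hαΦ
      rwa [hm] at this
    obtain ⟨c, hc, hsign⟩ := hbase _ hγΦ
    have he : α - (m : ℝ) • b
        = ∑ x ∈ Pi, ((if x = α then (1:ℝ) else 0) - (if x = b then (m:ℝ) else 0)) • x := by
      simp only [sub_smul, Finset.sum_sub_distrib, hind Pi 1 α hα, hind Pi (m:ℝ) b hb, one_smul]
    have h1 := huniq (fun x => (c x : ℝ))
      (fun x => (if x = α then (1:ℝ) else 0) - (if x = b then (m:ℝ) else 0))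
      (hc.symm.trans he)
    have hcα : (c α : ℝ) = 1 := by
      have := h1 α hα
      simpa [hab] using this
    have hcb : (c b : ℝ) = -(m : ℝ) := by
      have := h1 b hb
      simpa [Ne.symm hab] using this
    rcases hsign with hs | hs
    · have := hs b hb
      have : (0:ℝ) ≤ (c b : ℝ) := by exact_mod_cast this
      linarith
    · have := hs α hα
      have : (c α : ℝ) ≤ 0 := by exact_mod_cast this
      linarith
  -- main work, per simple root β
  intro β hβPi
  have hβΦ := hPiΦ hβPi
  have hβ0 : β ≠ 0 := hne0 β hβΦ
  have hbbpos : (0:ℝ) < ⟪β, β⟫ :=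
    lt_of_le_of_ne real_inner_self_nonneg (Ne.symm (inner_self_ne_zero.mpr hβ0))
  -- reflection preserves Pos \ {β}
  have hre : ∀ γ ∈ Pos, γ ≠ β → (γ - (2 * ⟪γ, β⟫ / ⟪β, β⟫) • β ∈ Pos ∧
      γ - (2 * ⟪γ, β⟫ / ⟪β, β⟫) • β ≠ β) := by
    intro γ hγ hγβ
    obtain ⟨hγΦ, c, hc⟩ := (hPos γ).mp hγ
    obtain ⟨m, hm⟩ := hcrys β hβΦ γ hγΦ
    have hσΦ : γ - (m : ℝ) • β ∈ Φ := by
      have := hrefl β hβΦ γ hγΦ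
      rwa [hm] at this
    -- γ has a positive coefficient away from β
    have hA : ∃ α ∈ Pi, α ≠ β ∧ c α ≠ 0 := by
      by_contra hno
      push_neg at hno
      have hγeq : γ = (c β : ℝ) • β := by
        rw [hc, Finset.sum_eq_single_of_mem β hβPi]
        intro x hx hne
        rw [hno x hx hne]
        simp
      have hmem : (c β : ℝ) • β ∈ Φ := hγeq ▸ hγΦ
      rcases hred β hβΦ _ hmem with h1 | h1
      · have : c β = 1 := by exact_mod_cast h1
        rw [this] at hγeq
        simp at hγeq
        exact hγβ hγeq
      · have : (0:ℝ) ≤ (c β : ℝ) := Nat.cast_nonneg _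
        linarith
    obtain ⟨α, hαPi, hαβ, hcα⟩ := hA
    obtain ⟨d, hd, hsign⟩ := hbase _ hσΦ
    have he : γ - (m : ℝ) • β
        = ∑ x ∈ Pi, ((c x : ℝ) - (if x = β then (m:ℝ) else 0)) • x := by
      simp only [sub_smul, Finset.sum_sub_distrib, hind Pi (m:ℝ) β hβPi, ← hc]
    have h1 := huniq (fun x => (d x : ℝ))
      (fun x => (c x : ℝ) - (if x = β then (m:ℝ) else 0))
      (hd.symm.trans he)
    have hdα : (d α : ℝ) = (c α : ℝ) := by
      have := h1 α hαPi
      simpa [hαβ] using this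
    have hdαpos : 0 < d α := by
      have h2 : (0:ℝ) < (c α : ℝ) := by
        have : 0 < c α := Nat.pos_of_ne_zero hcα
        exact_mod_cast this
      have : (0:ℝ) < (d α : ℝ) := hdα ▸ h2
      exact_mod_cast this
    have hpos : ∀ x ∈ Pi, 0 ≤ d x := by
      rcases hsign with hs | hs
      · exact hs
      · exfalso
        have := hs α hαPi
        omega
    have hmemPos : γ - (m : ℝ) • β ∈ Pos := by
      rw [hPos]
      refine ⟨hσΦ, fun x => (d x).toNat, ?_⟩
      rw [hd]
      refine Finset.sum_congr rfl fun x hx => ?_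
      congr 1
      have := Int.toNat_of_nonneg (hpos x hx)
      exact_mod_cast (congrArg (fun z : ℤ => (z : ℝ)) this).symm
    have hneβ : γ - (m : ℝ) • β ≠ β := by
      intro heq
      have hγeq : γ = (1 + (m:ℝ)) • β := by
        have h4 : γ = β + (m : ℝ) • β := eq_add_of_sub_eq heq
        rw [h4, add_smul, one_smul]
      have hmem : (1 + (m:ℝ)) • β ∈ Φ := hγeq ▸ hγΦ
      rcases hred β hβΦ _ hmem with h2 | h2
      · have hm0 : (m : ℝ) = 0 := by linarith
        rw [hm0] at hγeq
        simp at hγeq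
        exact hγβ hγeq
      · have hm2 : (m : ℝ) = -2 := by linarith
        rw [hm2] at hγeq
        norm_num at hγeq
        -- γ = -β, contradiction with nonneg coefficients
        have hγneg : γ = ∑ x ∈ Pi, (if x = β then (-1:ℝ) else 0) • x := by
          rw [hind Pi (-1) β hβPi, hγeq]
          simp
        have h3 := huniq (fun x => (c x : ℝ)) (fun x => if x = β then (-1:ℝ) else 0)
          (hc.symm.trans hγneg) β hβPi
        simp at h3
        have : (0:ℝ) ≤ (c β : ℝ) := Nat.cast_nonneg _
        linarith
    rw [hm]
    exact ⟨hmemPos, hneβ⟩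
  -- split the sum
  have hsplit : ∑ γ ∈ Pos \ PosS, γ = ∑ γ ∈ Pos, γ - ∑ γ ∈ PosS, γ := by
    rw [eq_sub_iff_add_eq, Finset.sum_sdiff hPosSPos]
  rw [hsplit, inner_sub_left]
  have hμ : ⟪∑ γ ∈ Pos, γ, β⟫ = ⟪β, β⟫ :=
    sum_refl_inner β hβ0 Pos (hPiPos β hβPi) hre
  by_cases hβS : β ∈ S
  · -- β ∈ S : reflection preserves PosS \ {β} as well
    have hβPosS : β ∈ PosS := by
      rw [hPosS]
      refine ⟨hPiPos β hβPi, fun y => if y = β then 1 else 0, ?_⟩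
      have : ∑ y ∈ S, (((if y = β then 1 else 0 : ℤ) : ℝ)) • y
          = ∑ y ∈ S, (if y = β then (1:ℝ) else 0) • y := by
        refine Finset.sum_congr rfl fun y _ => ?_
        split <;> simp
      rw [this, hind S 1 β hβS, one_smul]
    have hreS : ∀ γ ∈ PosS, γ ≠ β → (γ - (2 * ⟪γ, β⟫ / ⟪β, β⟫) • β ∈ PosS ∧
        γ - (2 * ⟪γ, β⟫ / ⟪β, β⟫) • β ≠ β) := by
      intro γ hγ hγβ
      obtain ⟨hγPos, d, hd⟩ := (hPosS γ).mp hγ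
      have hγΦ : γ ∈ Φ := ((hPos γ).mp hγPos).1
      obtain ⟨m, hm⟩ := hcrys β hβΦ γ hγΦ
      obtain ⟨hmem, hneβ⟩ := hre γ hγPos hγβ
      refine ⟨?_, hneβ⟩
      rw [hPosS]
      refine ⟨hmem, fun x => d x - (if x = β then m else 0), ?_⟩
      rw [hm]
      have : ∑ x ∈ S, (((d x - (if x = β then m else 0) : ℤ)) : ℝ) • x
          = ∑ x ∈ S, (((d x : ℝ)) - (if x = β then (m:ℝ) else 0)) • x := by
        refine Finset.sum_congr rfl fun x _ => ?_
        congr 1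
        push_cast
        split <;> simp
      rw [this]
      simp only [sub_smul, Finset.sum_sub_distrib, hind S (m:ℝ) β hβS, ← hd]
    have hν : ⟪∑ γ ∈ PosS, γ, β⟫ = ⟪β, β⟫ :=
      sum_refl_inner β hβ0 PosS hβPosS hreS
    rw [hμ, hν]
    simp
  · -- β ∉ S : each γ ∈ PosS pairs nonpositively with β
    have hν : ⟪∑ γ ∈ PosS, γ, β⟫ ≤ 0 := by
      rw [sum_inner]
      apply Finset.sum_nonpos
      intro γ hγ
      obtain ⟨hγPos, d, hd⟩ := (hPosS γ).mp hγ
      obtain ⟨hγΦ, c, hc⟩ := (hPos γ).mp hγPos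
      have hext : γ = ∑ x ∈ Pi, (if x ∈ S then (d x : ℝ) else 0) • x := by
        have h1 : ∑ x ∈ S, (d x : ℝ) • x
            = ∑ x ∈ S, (if x ∈ S then (d x : ℝ) else 0) • x :=
          Finset.sum_congr rfl fun x hx => by rw [if_pos hx]
        rw [hd, h1]
        exact Finset.sum_subset hS fun x _ hx => by rw [if_neg hx, zero_smul]
      have hco := huniq (fun x => (c x : ℝ)) (fun x => if x ∈ S then (d x : ℝ) else 0)
        (hc.symm.trans hext)
      rw [hc, sum_inner]
      apply Finset.sum_nonpos
      intro x hx
      rw [real_inner_smul_left]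
      by_cases hxS : x ∈ S
      · have hxβ : x ≠ β := fun h => hβS (h ▸ hxS)
        have h1 : (0:ℝ) ≤ (c x : ℝ) := Nat.cast_nonneg _
        have h2 := hneg x hx β hβPi hxβ
        nlinarith
      · have hz : (c x : ℝ) = 0 := by
          simpa [hxS] using hco x hx
        rw [hz, zero_mul]
    rw [hμ]
    linarith
end
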